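/- Suppose w_1, …, w_m : ℝ → ℂ are differentiable and satisfy dw_j/dt = a_j · conj(w_1 ⋯ w_{j-1} w_{j+1} ⋯ w_m) for j = 1, …, m, where a_1, …, a_m ∈ ℝ with a_1 + ⋯ + a_m = 0. Then the function t ↦ |w_1(t)|² + ⋯ + |w_m(t)|² is constant. -/

import Mathlib

theorem stmt4 {m : ℕ} (a : Fin m → ℝ) (hsum : ∑ j, a j = 0) (w : Fin m → ℝ → ℂ)
    (hw : ∀ j t, HasDerivAt (w j)
      ((a j : ℂ) * (starRingEnd ℂ) (∏ k ∈ Finset.univ.erase j, w k t)) t) :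
    ∀ t s : ℝ, ∑ j, ‖w j t‖ ^ 2 = ∑ j, ‖w j s‖ ^ 2 := by
  have key : ∀ t : ℝ, HasDerivAt (fun t => ∑ j, ‖w j t‖ ^ 2) 0 t := by
    intro t
    have hj : ∀ j : Fin m, HasDerivAt (fun t => ‖w j t‖ ^ 2)
        (2 * a j * (∏ k, w k t).re) t := by
      intro j
      have h1 := (hw j t).mul (hw j t).star
      have h2 := Complex.reCLM.hasFDerivAt.comp_hasDerivAt t h1
      have heq : (fun t => (w j t * star (w j t)).re) = fun t => ‖w j t‖ ^ 2 := by
        funext u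
        simp [Complex.mul_conj, Complex.normSq_eq_norm_sq,
          ← Complex.ofReal_pow]
      simp only [Function.comp_def, Complex.reCLM_apply, Pi.mul_apply] at h2
      rw [heq] at h2
      refine h2.congr_deriv ?_
      have hprod : w j t * ∏ k ∈ Finset.univ.erase j, w k t = ∏ k, w k t :=
        Finset.mul_prod_erase Finset.univ (fun k => w k t) (Finset.mem_univ j)
      have hkey : (a j : ℂ) * (starRingEnd ℂ) (∏ k ∈ Finset.univ.erase j, w k t)
            * star (w j t)
          + w j t * star ((a j : ℂ) * (starRingEnd ℂ) (∏ k ∈ Finset.univ.erase j, w k t))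
          = (a j : ℂ) * ((starRingEnd ℂ) (∏ k, w k t) + ∏ k, w k t) := by
        rw [← hprod]
        simp only [RCLike.star_def, map_mul, Complex.conj_conj, Complex.conj_ofReal]
        ring
      rw [hkey, Complex.mul_re, Complex.add_re, Complex.add_im, Complex.conj_re,
        Complex.conj_im, Complex.ofReal_re, Complex.ofReal_im]
      ring
    have hs := HasDerivAt.fun_sum (fun j (_ : j ∈ Finset.univ) => hj j)
    refine hs.congr_deriv ?_
    rw [← Finset.sum_mul, ← Finset.mul_sum, hsum, mul_zero, zero_mul]
  intro t s
  exact is_const_of_deriv_eq_zero (fun x => (key x).differentiableAt)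
    (fun x => (key x).deriv) t s
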